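/- Let F be an infinite field of characteristic p > 0, let w_1, w_2 ≥ 1 be integers, and let P_1(X) = Σ_{i=0}^{m} b_i X^{p^i} and P_2(Y) = Σ_{i=0}^{n} c_i Y^{p^i} be additive polynomials with coefficients b_i, c_i ∈ F. Set W = {(x,y) ∈ F² : P_1(x) + P_2(y) = 0}. Assume: (i) the projection of W to each of the two coordinates is surjective onto F; and (ii) W is stable under the action (x,y) ↦ (α^{w_1}·x, β^{w_2}·y) for all α, β ∈ F^×. Then all coefficients b_0,…,b_m and c_0,…,c_n are zero; equivalently, W = F². -/

import Mathlib

/-!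
Shared setup.  The field `C` plays the role of `ℂ_∞`: the completion of a fixed
algebraic closure of `𝔽_p((1/θ))`, an algebraically closed, perfect, complete
nonarchimedean valued field of characteristic `p`.  It is axiomatized by its
characterizing properties: an algebraically closed perfect field `C` of
characteristic `p` together with a nonarchimedean absolute value `abv` for which `C`
is complete and with a distinguished element `θ` satisfying `abv θ = p` (the latter
hypotheses appear explicitly in the theorems below).
-/

namespace Carlitz

noncomputable section

open Filter Polynomial

variable (C : Type) [Field C] (p : ℕ) [Fact p.Prime] [CharP C p]

/-- The finite subfield `𝔽_{p^l}` of `C`: the fixed points of the `l`-th iterate of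
the Frobenius. -/
def Fq (l : ℕ) : Subfield C where
  carrier := {x : C | x ^ p ^ l = x}
  mul_mem' := by
    intro a b ha hb
    simp only [Set.mem_setOf_eq] at *
    rw [mul_pow, ha, hb]
  one_mem' := by simp
  add_mem' := by
    intro a b ha hb
    simp only [Set.mem_setOf_eq] at *
    have h := map_add (iterateFrobenius C p l) a b
    simp only [iterateFrobenius_def] at h
    rw [h, ha, hb]
  zero_mem' := by
    simp only [Set.mem_setOf_eq]
    exact zero_pow (pow_pos (Nat.Prime.pos Fact.out) l).ne'
  neg_mem' := by
    intro a ha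
    simp only [Set.mem_setOf_eq] at *
    have h := map_neg (iterateFrobenius C p l) a
    simp only [iterateFrobenius_def] at h
    rw [h, ha]
  inv_mem' := by
    intro a ha
    simp only [Set.mem_setOf_eq] at *
    rw [inv_pow, ha]

variable {C}

section Abv

variable (abv : AbsoluteValue C ℝ)

/-- `abv` is nonarchimedean. -/
def IsNonarch : Prop := ∀ x y : C, abv (x + y) ≤ max (abv x) (abv y)

/-- Convergence of a sequence with respect to `abv`. -/
def TendstoAbv (f : ℕ → C) (x : C) : Prop :=
  ∀ ε : ℝ, 0 < ε → ∃ N : ℕ, ∀ n, N ≤ n → abv (f n - x) < ε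

/-- Unconditional summability of a family with respect to `abv`, with sum `S`. -/
def HasAbvSum {ι : Type} (f : ι → C) (S : C) : Prop :=
  ∀ ε : ℝ, 0 < ε → ∃ F : Finset ι, ∀ G : Finset ι, F ⊆ G → abv ((∑ i ∈ G, f i) - S) < ε

/-- `C` is complete with respect to `abv`. -/
def AbvComplete : Prop :=
  ∀ f : ℕ → C, (∀ ε : ℝ, 0 < ε → ∃ N : ℕ, ∀ m, N ≤ m → ∀ n, N ≤ n → abv (f m - f n) < ε) →
    ∃ x : C, TendstoAbv abv f x

end Abv

/-- The rational function field `K = 𝔽_p(θ)`: the subfield of `C` generated by `θ`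
(it automatically contains the prime field `𝔽_p`). -/
def Kzero (θ : C) : Subfield C := Subfield.closure {θ}

/-- `K̄`: the algebraic closure of `K = 𝔽_p(θ)` inside `C`, i.e. the subfield of all
elements of `C` that are algebraic over `K`. -/
def Kbar (θ : C) : Subfield C :=
  Subfield.closure {x : C | IsAlgebraic (Kzero θ) x}

/-- The transcendence degree, over a subfield `K` of `C`, of the subfield of `C`
generated by `K` and a set `S`: the supremum of the cardinalities of its finite
subsets that are algebraically independent over `K`. -/
def trdegOver (K : Subfield C) (S : Set C) : ℕ :=
  sSup {n : ℕ | ∃ T : Finset C, ↑T ⊆ (Subfield.closure ((K : Set C) ∪ S) : Set C) ∧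
    T.card = n ∧ AlgebraicIndependent K (fun x : (T : Set C) => (x : C))}

/-- An index `(s_1, …, s_d)`: a nonempty finite tuple of positive integers, encoded
as a (nonempty) list. -/
abbrev Index : Type := List ℕ+

/-- `Sub`-closedness of a finite set of indices: membership is closed under passing to
nonempty contiguous subtuples (`Sub(𝐬) = {(s_i, …, s_j) | 1 ≤ i ≤ j ≤ d}`). -/
def SubClosed (I : Finset Index) : Prop :=
  ∀ s ∈ I, ∀ t : Index, t <:+: s → t ≠ [] → t ∈ I

/-- One term `a_1^{-s_1} ⋯ a_d^{-s_d}` of a multiple zeta value, the monic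
polynomials `a_i ∈ 𝔽_{p^l}[θ]` being evaluated at `θ ∈ C`. -/
def mzvTerm (θ : C) (l : ℕ) (s : Index) (a : Fin s.length → Polynomial (Fq C p l)) : C :=
  ∏ i, (Polynomial.eval₂ (Fq C p l).subtype θ (a i) ^ (s.get i : ℕ))⁻¹

/-- The tuples `(a_1, …, a_d)` of monic polynomials in `𝔽_{p^l}[θ]` with
`deg a_1 > ⋯ > deg a_d ≥ 0`. -/
def MZVTuples (l d : ℕ) : Type :=
  {a : Fin d → Polynomial (Fq C p l) // (∀ i, (a i).Monic) ∧
    StrictAnti fun i => (a i).natDegree}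

/-- `z` is the multiple zeta value `ζ_l(s_1, …, s_d)`: the (unconditional) sum of the
family of terms `a_1^{-s_1} ⋯ a_d^{-s_d}` over all tuples of monic polynomials in
`𝔽_{p^l}[θ]` with strictly decreasing degrees. -/
def IsMZV (abv : AbsoluteValue C ℝ) (θ : C) (l : ℕ) (s : Index) (z : C) : Prop :=
  HasAbvSum abv (fun a : MZVTuples (C := C) p l s.length => mzvTerm p θ l s a.1) z

/-- The partial products of the infinite product defining `Ω_l`, evaluated at `t = θ`;
`β` is the fixed `(q-1)`-st root of `-θ`, so that `(-θ)^{-q/(q-1)} = (β^q)⁻¹`. -/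
def omegaAtThetaPartial (θ : C) (l : ℕ) (β : C) (N : ℕ) : C :=
  (β ^ p ^ l)⁻¹ * ∏ i ∈ Finset.range N, (1 - θ * (θ ^ (p ^ l) ^ (i + 1))⁻¹)

/-- `w` is the value `Ω_l(θ)`: the limit of the partial products of the infinite
product defining `Ω_l`, evaluated at `t = θ`. -/
def IsOmegaAtTheta (abv : AbsoluteValue C ℝ) (θ : C) (l : ℕ) (β : C) (w : C) : Prop :=
  TendstoAbv abv (omegaAtThetaPartial p θ l β) w

/-- `π` is the Carlitz period `π̃_l = Ω_l(θ)⁻¹` (for a choice of `(q-1)`-st root `β`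
of `-θ`). -/
def IsCarlitzPeriod (abv : AbsoluteValue C ℝ) (θ : C) (l : ℕ) (π : C) : Prop :=
  ∃ β w : C, β ^ (p ^ l - 1) = -θ ∧ IsOmegaAtTheta p abv θ l β w ∧ w ≠ 0 ∧ π = w⁻¹

/-- Membership in the Laurent series subfield `𝔽_{p^l}((1/θ)) ⊆ C`: `x` is a
convergent sum `∑_{i ≤ N} c_i θ^i` with coefficients `c_i ∈ 𝔽_{p^l}`. -/
def InLaurentField (abv : AbsoluteValue C ℝ) (θ : C) (l : ℕ) (x : C) : Prop :=
  ∃ (N : ℤ) (c : ℤ → C), (∀ i, c i ∈ Fq C p l) ∧ (∀ i : ℤ, N < i → c i = 0) ∧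
    HasAbvSum abv (fun i : ℤ => c i * θ ^ i) x

section Twist

variable [PerfectRing C p]

/-- The `n`-fold twist on elements of `C`: `x ↦ x^{p^n}` for `n ∈ ℤ` (using
perfectness for negative `n`). -/
def twistHom (n : ℤ) : C →+* C := ((frobeniusEquiv C p ^ n : C ≃+* C) : C →+* C)

/-- The `n`-fold twist `f ↦ f^{(n)}` on power series:
`(∑ a_i t^i)^{(n)} = ∑ a_i^{p^n} t^i`. -/
def twistPS (n : ℤ) : PowerSeries C →+* PowerSeries C := PowerSeries.map (twistHom p n)

/-- The `n`-fold twist on polynomials. -/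
def twistPoly (n : ℤ) : Polynomial C →+* Polynomial C := Polynomial.mapRingHom (twistHom p n)

/-- The `n`-fold twist on formal Laurent series. -/
def twistLS (n : ℤ) (f : LaurentSeries C) : LaurentSeries C := f.map (twistHom p n)

end Twist

/-- The `N`-th partial product of the infinite product defining `Ω_l`, as a power
series; `β` is the fixed `(q-1)`-st root of `-θ`, so `(-θ)^{-q/(q-1)} = (β^q)⁻¹`. -/
def omegaPartial (θ : C) (l : ℕ) (β : C) (N : ℕ) : PowerSeries C :=
  PowerSeries.C (β ^ p ^ l)⁻¹ *
    ∏ i ∈ Finset.range N, (1 - PowerSeries.C (θ ^ (p ^ l) ^ (i + 1))⁻¹ * PowerSeries.X)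

/-- `Ω` is the power series `Ω_l(t) ∈ C[[t]]`: the infinite product converges
coefficientwise to `Ω`. -/
def IsOmega (abv : AbsoluteValue C ℝ) (θ : C) (l : ℕ) (β : C) (Ω : PowerSeries C) : Prop :=
  ∀ n : ℕ, ∀ ε : ℝ, 0 < ε → ∃ M : ℕ, ∀ N, M ≤ N →
    abv (PowerSeries.coeff n (omegaPartial p θ l β N) - PowerSeries.coeff n Ω) < ε

/-- `x` is the value `f(θ)` of a power series `f` at `t = θ` (a convergent sum in `C`). -/
def EvalAtTheta (abv : AbsoluteValue C ℝ) (θ : C) (f : PowerSeries C) (x : C) : Prop :=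
  HasAbvSum abv (fun n : ℕ => PowerSeries.coeff n f * θ ^ n) x

/-- Membership in the Tate algebra `𝕋 ⊆ C[[t]]`: the coefficients tend to `0`. -/
def InTate (abv : AbsoluteValue C ℝ) (f : PowerSeries C) : Prop :=
  Tendsto (fun n : ℕ => abv (PowerSeries.coeff n f)) atTop (nhds 0)

/-- Summability of a family of power series with respect to the Gauss sup-norm of the
Tate algebra, with sum `S`. -/
def HasSumTate (abv : AbsoluteValue C ℝ) {ι : Type} (f : ι → PowerSeries C)
    (S : PowerSeries C) : Prop :=
  ∀ ε : ℝ, 0 < ε → ∃ F : Finset ι, ∀ G : Finset ι, F ⊆ G → ∀ n : ℕ,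
    abv (PowerSeries.coeff n ((∑ i ∈ G, f i) - S)) < ε

/-- The subfield `L₂` is spanned over the subfield `L₁` by finitely many elements,
i.e. `L₂` is a finite extension of `L₁`. -/
def SpansFinitelyOver (L₁ L₂ : Subfield C) : Prop :=
  ∃ s : Finset C, ↑s ⊆ (L₂ : Set C) ∧
    ∀ x ∈ L₂, ∃ c : C → C, (∀ y, c y ∈ L₁) ∧ x = ∑ y ∈ s, c y * y

/-- The subfield `K_∞ = 𝔽_p((1/θ))` of `C`. -/
def Kinfty (abv : AbsoluteValue C ℝ) (θ : C) : Subfield C :=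
  Subfield.closure {x : C | InLaurentField p abv θ 1 x}

/-- A power series `∑ a_i t^i ∈ C[[t]]` is entire: `|a_i|^{1/i} → 0` and the
coefficients generate a finite field extension of `𝔽_p((1/θ))`. -/
def IsEntire (abv : AbsoluteValue C ℝ) (θ : C) (f : PowerSeries C) : Prop :=
  Tendsto (fun n : ℕ => abv (PowerSeries.coeff n f) ^ ((1 : ℝ) / n)) atTop (nhds 0) ∧
    SpansFinitelyOver (Kinfty p abv θ)
      (Subfield.closure ({x : C | InLaurentField p abv θ 1 x} ∪
        Set.range fun n : ℕ => PowerSeries.coeff n f))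

/-- Strictly decreasing tuples `i_1 > i_2 > ⋯ > i_d ≥ 0` of natural numbers. -/
def DecTuples (d : ℕ) : Type := {i : Fin d → ℕ // StrictAnti i}

section Polylog

variable [PerfectRing C p]

/-- One term of the `t`-motivic Carlitz multiple polylogarithm `L_{l,u,s}`, as a
power series (the factors `1/(t - θ^{q^k})` are expanded as power series on the
closed unit disk, i.e. inverted in `C[[t]]`). -/
def polylogTerm (θ : C) (l : ℕ) {d : ℕ} (s : Fin d → ℕ+) (u : Fin d → Polynomial C)
    (i : DecTuples d) : PowerSeries C :=
  (∏ k, (((u k).map (iterateFrobenius C p (i.1 k * l)) : Polynomial C) : PowerSeries C)) *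
    ((∏ k, (∏ j ∈ Finset.Icc 1 (i.1 k),
      (PowerSeries.X - PowerSeries.C (θ ^ (p ^ l) ^ j))) ^ (s k : ℕ)))⁻¹

/-- `Lser` is the `t`-motivic Carlitz multiple polylogarithm `L_{l,u,s}(t)`: the sum,
in the Tate algebra, of the family of its terms. -/
def IsPolylog (abv : AbsoluteValue C ℝ) (θ : C) (l : ℕ) {d : ℕ} (s : Fin d → ℕ+)
    (u : Fin d → Polynomial C) (Lser : PowerSeries C) : Prop :=
  HasSumTate abv (polylogTerm p θ l s u) Lser

/-- One term of the Carlitz multiple polylogarithm series, evaluated at `t = θ`. -/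
def polylogTermAtTheta (θ : C) (l : ℕ) {d : ℕ} (s : Fin d → ℕ+) (u : Fin d → Polynomial C)
    (i : DecTuples d) : C :=
  (∏ k, Polynomial.eval θ ((u k).map (iterateFrobenius C p (i.1 k * l)))) *
    ((∏ k, (∏ j ∈ Finset.Icc 1 (i.1 k), (θ - θ ^ (p ^ l) ^ j)) ^ (s k : ℕ)))⁻¹

end Polylog

/-- The Gauss-norm bound `‖u‖_∞ < |θ|_∞^{s·q/(q-1)}` (with `q = p^l`): every
coefficient of `u` has absolute value `< abv θ ^ (s·q/(q-1))`. -/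
def GaussBound (abv : AbsoluteValue C ℝ) (θ : C) (l : ℕ) (sk : ℕ) (u : Polynomial C) : Prop :=
  ∀ i : ℕ, abv (u.coeff i) < abv θ ^ (((sk : ℝ) * (p : ℝ) ^ l) / ((p : ℝ) ^ l - 1))

/-- All coefficients of the polynomial `u` lie in the subfield `K`. -/
def CoeffsIn (K : Subfield C) (u : Polynomial C) : Prop := ∀ i : ℕ, u.coeff i ∈ K

variable (C)

/-- For `l ≥ 1` the subfield `𝔽_{p^l} ⊆ C` is finite (it consists of roots of
`X^{p^l} - X`). -/
def fqFintype (l : ℕ) (hl : 0 < l) : Fintype (Fq C p l) := by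
  have hp1 : 1 < p ^ l := Nat.one_lt_pow hl.ne' (Nat.Prime.one_lt Fact.out)
  have hne : (Polynomial.X ^ p ^ l - Polynomial.X : Polynomial C) ≠ 0 := by
    intro h
    have h2 : (Polynomial.X ^ p ^ l : Polynomial C) = Polynomial.X := by
      rwa [sub_eq_zero] at h
    have h3 := congrArg Polynomial.natDegree h2
    rw [Polynomial.natDegree_X_pow, Polynomial.natDegree_X] at h3
    omega
  have hfin : ({x : C | x ^ p ^ l = x}).Finite := by
    refine (Polynomial.finite_setOf_isRoot hne).subset ?_
    intro x hx
    simp only [Set.mem_setOf_eq, Polynomial.IsRoot, Polynomial.eval_sub,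
      Polynomial.eval_pow, Polynomial.eval_X] at *
    rw [hx, sub_self]
  have hfin2 : ((Fq C p l : Set C)).Finite := hfin
  exact hfin2.fintype

/-- `D_i ∈ 𝔽_q[θ]`: the product of all monic polynomials of degree `i` over
`𝔽_q = 𝔽_{p^l}`, written as the product over all choices of the `i` lower
coefficients.  The indeterminate of `Polynomial (Fq C p l)` plays the role of `θ`. -/
def Dpoly (l : ℕ) (hl : 0 < l) (i : ℕ) : Polynomial (Fq C p l) :=
  letI := fqFintype C p l hl
  ∏ c : Fin i → Fq C p l,
    (Polynomial.X ^ i + ∑ j : Fin i, Polynomial.C (c j) * Polynomial.X ^ (j : ℕ))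

/-- The Carlitz factorial `Γ_{m+1} = ∏_i D_i^{m_{(i)}} ∈ 𝔽_q[θ]`, where
`m = ∑_i m_{(i)} q^i` is the `q`-adic expansion of `m`. -/
def gammaFact (l : ℕ) (hl : 0 < l) (m : ℕ) : Polynomial (Fq C p l) :=
  ∏ i ∈ Finset.range ((Nat.digits (p ^ l) m).length),
    Dpoly C p l hl i ^ ((Nat.digits (p ^ l) m).getD i 0)

/-- The ring `𝔽_q[θ][t]`: polynomials in `t` (the outer variable) over `𝔽_q[θ]`
(inner variable `θ`). -/
abbrev ATRing (l : ℕ) : Type := Polynomial (Polynomial (Fq C p l))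

/-- The fraction field `𝔽_q(θ, t)`. -/
abbrev ATField (l : ℕ) : Type := FractionRing (ATRing C p l)

/-- The coefficient `∏_{j=1}^{i}(t^{q^i} - θ^{q^j}) / ∏_{j=0}^{i-1}(t^{q^i} - t^{q^j})`
of `x^{q^i}` in the Anderson–Thakur generating series. -/
def atG (l : ℕ) (i : ℕ) : ATField C p l :=
  algebraMap (ATRing C p l) (ATField C p l)
      (∏ j ∈ Finset.Icc 1 i,
        (Polynomial.X ^ (p ^ l) ^ i - Polynomial.C Polynomial.X ^ (p ^ l) ^ j)) /
    algebraMap (ATRing C p l) (ATField C p l)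
      (∏ j ∈ Finset.range i, (Polynomial.X ^ (p ^ l) ^ i - Polynomial.X ^ (p ^ l) ^ j))

open scoped Classical in
/-- The series `1 - ∑_{i ≥ 0} [∏_{j=1}^{i}(t^{q^i} - θ^{q^j}) / ∏_{j=0}^{i-1}(t^{q^i} - t^{q^j})] x^{q^i}`,
a power series in `x` over `𝔽_q(θ, t)`. -/
def atBase (l : ℕ) : PowerSeries (ATField C p l) :=
  PowerSeries.mk fun k =>
    if k = 0 then 1
    else if h : ∃ i : ℕ, k = (p ^ l) ^ i then -(atG C p l (Nat.find h)) else 0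

/-- The Carlitz factorial `Γ_{m+1}|_{θ = t}`, i.e. with `θ` replaced by `t`, as an
element of `𝔽_q[θ][t]`. -/
def gammaAtT (l : ℕ) (hl : 0 < l) (m : ℕ) : ATRing C p l :=
  Polynomial.eval₂ ((Polynomial.C).comp (Polynomial.C)) Polynomial.X (gammaFact C p l hl m)

/-- `H : ℕ → 𝔽_q[θ][t]` is the family of Anderson–Thakur polynomials `(H_{l,s})_{s≥0}`:
it satisfies the generating identity
`(1 - ∑_{i≥0} [⋯] x^{q^i})⁻¹ = ∑_{s≥0} (H_s(t) / Γ_{s+1}|_{θ=t}) x^s`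
of power series in `x` over `𝔽_q(θ, t)`. -/
def IsATFamily (l : ℕ) (hl : 0 < l) (H : ℕ → ATRing C p l) : Prop :=
  (atBase C p l)⁻¹ =
    PowerSeries.mk fun s =>
      algebraMap (ATRing C p l) (ATField C p l) (H s) /
        algebraMap (ATRing C p l) (ATField C p l) (gammaAtT C p l hl s)

/-- The image in `C[t]` of `g(θ, t) ∈ 𝔽_q[θ][t]`, evaluating the variable `θ` at the
distinguished element `θ ∈ C`. -/
def toPolyC (θ : C) (l : ℕ) (g : ATRing C p l) : Polynomial C :=
  g.map (Polynomial.eval₂RingHom (Fq C p l).subtype θ)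

variable {C}

/-- The contiguous subtuple `(s_k, s_{k+1}, …, s_{j-1})` (0-based) of a tuple `s` of
length `d`, for `j ≤ d`. -/
def subTuple {α : Type} {d : ℕ} (s : Fin d → α) (k j : ℕ) (hj : j ≤ d) :
    Fin (j - k) → α :=
  fun m => s ⟨k + (m : ℕ), by have h := m.isLt; omega⟩

/-- The weight `s_k + s_{k+1} + ⋯ + s_{d-1}` (0-based) of the tail of an index. -/
def wtFrom {d : ℕ} (s : Fin d → ℕ+) (k : ℕ) : ℕ :=
  ∑ m : Fin d, if k ≤ (m : ℕ) then (s m : ℕ) else 0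

end

end Carlitz

namespace Carlitz

noncomputable section

open Filter Polynomial


private lemma aux_vanish (F : Type) [Field F] [Infinite F] (p w d : ℕ) (hp : p.Prime)
    (hw : 1 ≤ w) (a : ℕ → F)
    (h : ∀ α : F, α ≠ 0 → ∑ i ∈ Finset.range d, a i * α ^ (w * p ^ i)
      = ∑ i ∈ Finset.range d, a i) :
    ∀ i ∈ Finset.range d, a i = 0 := by
  set q : Polynomial F :=
    (∑ i ∈ Finset.range d, Polynomial.C (a i) * Polynomial.X ^ (w * p ^ i))
      - Polynomial.C (∑ i ∈ Finset.range d, a i) with hq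
  have hq0 : q = 0 := by
    apply Polynomial.eq_zero_of_infinite_isRoot
    refine ((Set.finite_singleton (0 : F)).infinite_compl).mono ?_
    intro x hx
    simp only [Set.mem_compl_iff, Set.mem_singleton_iff] at hx
    simp only [Set.mem_setOf_eq, Polynomial.IsRoot, hq, Polynomial.eval_sub,
      Polynomial.eval_finset_sum, Polynomial.eval_mul, Polynomial.eval_C,
      Polynomial.eval_pow, Polynomial.eval_X]
    rw [h x hx, sub_self]
  intro j hj
  have hcoef := congrArg (fun r => Polynomial.coeff r (w * p ^ j)) hq0
  simp only [hq, Polynomial.coeff_sub, Polynomial.finset_sum_coeff,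
    Polynomial.coeff_C_mul, Polynomial.coeff_X_pow, Polynomial.coeff_zero] at hcoef
  have hne : w * p ^ j ≠ 0 := (Nat.mul_pos hw (pow_pos hp.pos j)).ne'
  rw [Polynomial.coeff_C, if_neg hne, sub_zero] at hcoef
  rw [Finset.sum_eq_single j (fun i _ hij => by
      rw [if_neg fun hEq => hij (Nat.pow_right_injective hp.two_le
        (Nat.eq_of_mul_eq_mul_left hw hEq.symm)), mul_zero]) (fun hjj => absurd hj hjj)] at hcoef
  rw [if_pos rfl, mul_one] at hcoef
  exact hcoef

/-- Let `F` be an infinite field of characteristic `p > 0` and let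
`P_1(X) = ∑ b_i X^{p^i}`, `P_2(Y) = ∑ c_i Y^{p^i}` be additive polynomials over `F`.
If `W = {(x,y) | P_1(x) + P_2(y) = 0}` surjects onto each coordinate and is stable
under `(x,y) ↦ (α^{w_1} x, β^{w_2} y)` for all `α, β ∈ F^×` (`w_1, w_2 ≥ 1`), then all
coefficients `b_i, c_i` vanish; equivalently, `W = F²`. -/
theorem additive_polynomial_relation_trivial
    (F : Type) [Field F] (p : ℕ) (hp : p.Prime) [CharP F p] [Infinite F]
    (w₁ w₂ : ℕ) (hw₁ : 1 ≤ w₁) (hw₂ : 1 ≤ w₂)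
    (m n : ℕ) (b : ℕ → F) (c : ℕ → F)
    (hproj₁ : ∀ x : F, ∃ y : F,
      (∑ i ∈ Finset.range (m + 1), b i * x ^ p ^ i) +
        (∑ i ∈ Finset.range (n + 1), c i * y ^ p ^ i) = 0)
    (hproj₂ : ∀ y : F, ∃ x : F,
      (∑ i ∈ Finset.range (m + 1), b i * x ^ p ^ i) +
        (∑ i ∈ Finset.range (n + 1), c i * y ^ p ^ i) = 0)
    (hstab : ∀ α β : F, α ≠ 0 → β ≠ 0 → ∀ x y : F,
      (∑ i ∈ Finset.range (m + 1), b i * x ^ p ^ i) +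
        (∑ i ∈ Finset.range (n + 1), c i * y ^ p ^ i) = 0 →
      (∑ i ∈ Finset.range (m + 1), b i * (α ^ w₁ * x) ^ p ^ i) +
        (∑ i ∈ Finset.range (n + 1), c i * (β ^ w₂ * y) ^ p ^ i) = 0) :
    ((∀ i ∈ Finset.range (m + 1), b i = 0) ∧ (∀ i ∈ Finset.range (n + 1), c i = 0)) ∧
      ∀ x y : F,
        (∑ i ∈ Finset.range (m + 1), b i * x ^ p ^ i) +
          (∑ i ∈ Finset.range (n + 1), c i * y ^ p ^ i) = 0 := by
  haveI : Fact p.Prime := ⟨hp⟩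
  -- b vanishes
  have hb : ∀ i ∈ Finset.range (m + 1), b i = 0 := by
    apply aux_vanish F p w₁ (m + 1) hp hw₁
    intro α hα
    obtain ⟨y, hy⟩ := hproj₁ 1
    have h2 := hstab α 1 hα one_ne_zero 1 y hy
    simp only [one_pow, one_mul, mul_one] at h2
    have key : ∑ i ∈ Finset.range (m + 1), b i * (α ^ w₁) ^ p ^ i
        = ∑ i ∈ Finset.range (m + 1), b i * (1 : F) ^ p ^ i := by
      exact add_right_cancel (h2.trans hy.symm)
    calc ∑ i ∈ Finset.range (m + 1), b i * α ^ (w₁ * p ^ i)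
        = ∑ i ∈ Finset.range (m + 1), b i * (α ^ w₁) ^ p ^ i := by
          refine Finset.sum_congr rfl fun i _ => by rw [pow_mul]
      _ = ∑ i ∈ Finset.range (m + 1), b i := by
          rw [key]; exact Finset.sum_congr rfl fun i _ => by rw [one_pow, mul_one]
  have hc : ∀ i ∈ Finset.range (n + 1), c i = 0 := by
    apply aux_vanish F p w₂ (n + 1) hp hw₂
    intro β hβ
    obtain ⟨x, hx⟩ := hproj₂ 1
    have h2 := hstab 1 β one_ne_zero hβ x 1 hx
    simp only [one_pow, one_mul, mul_one] at h2
    have key : ∑ i ∈ Finset.range (n + 1), c i * (β ^ w₂) ^ p ^ i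
        = ∑ i ∈ Finset.range (n + 1), c i * (1 : F) ^ p ^ i := by
      exact add_left_cancel (h2.trans hx.symm)
    calc ∑ i ∈ Finset.range (n + 1), c i * β ^ (w₂ * p ^ i)
        = ∑ i ∈ Finset.range (n + 1), c i * (β ^ w₂) ^ p ^ i := by
          refine Finset.sum_congr rfl fun i _ => by rw [pow_mul]
      _ = ∑ i ∈ Finset.range (n + 1), c i := by
          rw [key]; exact Finset.sum_congr rfl fun i _ => by rw [one_pow, mul_one]
  refine ⟨⟨hb, hc⟩, fun x y => ?_⟩
  rw [Finset.sum_eq_zero fun i hi => by rw [hb i hi, zero_mul],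
    Finset.sum_eq_zero fun i hi => by rw [hc i hi, zero_mul], add_zero]

end

end Carlitz
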